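/- Let P > 0, N₀ > 0, η ∈ (0,1], β ∈ (0,1), and let X and W be independent exponential random variables with means λ_SR > 0 and λ_RD > 0. Let θ₂ = √(N₀/(ηβP)), let ψ(x) = N₀²/( P(1−β)(ηβP·x² − N₀) ) − x, and let θ₃ be the unique zero of ψ in (θ₂, ∞). Then the probability of strictly positive secrecy rate satisfies ℙ( (X + W)·P(1−β)·(ηβP·W² − N₀) > N₀² ) = exp(−θ₃/λ_RD) + (1/λ_RD)·∫_{θ₂}^{θ₃} exp( −( ψ(x)/λ_SR + x/λ_RD ) ) dx. -/

import Mathlib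

open MeasureTheory ProbabilityTheory Real Set

lemma expMeasure_def' (r : ℝ) : expMeasure r = volume.withDensity (exponentialPDF r) := rfl

lemma measurable_exponentialPDF' (r : ℝ) : Measurable (exponentialPDF r) :=
  (measurable_exponentialPDFReal r).ennreal_ofReal

lemma expMeasure_Iic' {r : ℝ} (hr : 0 < r) (x : ℝ) :
    expMeasure r (Iic x) = ENNReal.ofReal (if 0 ≤ x then 1 - rexp (-(r * x)) else 0) := by
  rw [expMeasure_def', withDensity_apply _ measurableSet_Iic,
    lintegral_exponentialPDF_eq_antiDeriv hr x]

lemma expMeasure_Ioi' {r : ℝ} (hr : 0 < r) {x : ℝ} (hx : 0 ≤ x) :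
    expMeasure r (Ioi x) = ENNReal.ofReal (rexp (-(r * x))) := by
  haveI := isProbabilityMeasure_expMeasure hr
  rw [← compl_Iic, measure_compl measurableSet_Iic (measure_ne_top _ _), measure_univ,
    expMeasure_Iic' hr, if_pos hx]
  have he : rexp (-(r * x)) ≤ 1 := by apply exp_le_one_iff.2; nlinarith
  rw [← ENNReal.ofReal_one, ← ENNReal.ofReal_sub _ (by nlinarith [exp_pos (-(r * x))])]
  ring_nf

lemma expMeasure_Ioi_of_neg' {r : ℝ} (hr : 0 < r) {x : ℝ} (hx : x < 0) :
    expMeasure r (Ioi x) = 1 := by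
  haveI := isProbabilityMeasure_expMeasure hr
  rw [← compl_Iic, measure_compl measurableSet_Iic (measure_ne_top _ _), measure_univ,
    expMeasure_Iic' hr, if_neg (not_le.2 hx)]
  simp

lemma expMeasure_Iio_zero' (r : ℝ) : expMeasure r (Iio 0) = 0 := by
  rw [expMeasure_def', withDensity_apply _ measurableSet_Iio,
    lintegral_exponentialPDF_of_nonpos le_rfl]

/-- **Probability of strictly positive secrecy rate, PS policy (Proposition 3, exact form).**
`ℙ((X+W) P(1-β)(ηβP W² - N₀) > N₀²) = e^{-θ₃/λ_RD} + (1/λ_RD)∫_{θ₂}^{θ₃}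
e^{-(ψ(x)/λ_SR + x/λ_RD)} dx`, where `θ₃` is the unique zero of `ψ` in `(θ₂, ∞)`. -/
theorem prob_positive_secrecy_PS
    {Ω : Type*} [MeasurableSpace Ω] (μ : Measure Ω) [IsProbabilityMeasure μ]
    (X W : Ω → ℝ) (hXm : Measurable X) (hWm : Measurable W)
    (hindep : IndepFun X W μ)
    (lamSR lamRD : ℝ) (hlamSR : 0 < lamSR) (hlamRD : 0 < lamRD)
    (hX : Measure.map X μ = expMeasure lamSR⁻¹)
    (hW : Measure.map W μ = expMeasure lamRD⁻¹)
    (P N0 η β : ℝ) (hP : 0 < P) (hN0 : 0 < N0)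
    (hη0 : 0 < η) (hη1 : η ≤ 1) (hβ0 : 0 < β) (hβ1 : β < 1)
    (θ2 : ℝ) (hθ2 : θ2 = Real.sqrt (N0 / (η * β * P)))
    (ψ : ℝ → ℝ)
    (hψ : ∀ x, ψ x = N0 ^ 2 / (P * (1 - β) * (η * β * P * x ^ 2 - N0)) - x)
    (θ3 : ℝ) (hθ3 : θ2 < θ3) (hψθ3 : ψ θ3 = 0)
    (huniq : ∀ t, θ2 < t → ψ t = 0 → t = θ3) :
    (μ {ω | (X ω + W ω) * (P * (1 - β)) * (η * β * P * W ω ^ 2 - N0) > N0 ^ 2}).toReal =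
      Real.exp (-θ3 / lamRD)
        + (1 / lamRD) * ∫ x in θ2..θ3, Real.exp (-(ψ x / lamSR + x / lamRD)) := by
  have hrS : 0 < lamSR⁻¹ := inv_pos.2 hlamSR
  have hrR : 0 < lamRD⁻¹ := inv_pos.2 hlamRD
  haveI : IsProbabilityMeasure (expMeasure lamSR⁻¹) := isProbabilityMeasure_expMeasure hrS
  haveI : IsProbabilityMeasure (expMeasure lamRD⁻¹) := isProbabilityMeasure_expMeasure hrR
  have hc : 0 < P * (1 - β) := by nlinarith
  have hd : 0 < η * β * P := by positivity
  have hθ2nn : 0 ≤ θ2 := hθ2 ▸ Real.sqrt_nonneg _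
  have hθ2sq : η * β * P * θ2 ^ 2 = N0 := by
    rw [hθ2, sq_sqrt (by positivity)]
    field_simp
  have hD : ∀ w, θ2 < w → 0 < η * β * P * w ^ 2 - N0 := by
    intro w hw
    nlinarith [mul_pos hd (mul_pos (sub_pos.2 hw) (by linarith : (0:ℝ) < w + θ2))]
  -- ψ is strictly decreasing on (θ2, ∞)
  have hanti : ∀ a b, θ2 < a → a < b → ψ b < ψ a := by
    intro a b ha hab
    have hDa := hD a ha
    have hDb := hD b (ha.trans hab)
    rw [hψ a, hψ b]
    have h1 : N0 ^ 2 / (P * (1 - β) * (η * β * P * b ^ 2 - N0))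
        ≤ N0 ^ 2 / (P * (1 - β) * (η * β * P * a ^ 2 - N0)) := by
      apply div_le_div_of_nonneg_left (by positivity) (by positivity)
      nlinarith [mul_pos (mul_pos hd (sub_pos.2 hab)) (by linarith : (0:ℝ) < a + b)]
    linarith
  have hψpos : ∀ w, θ2 < w → w ≤ θ3 → 0 ≤ ψ w := by
    intro w hw hw3
    rcases eq_or_lt_of_le hw3 with h | h
    · rw [h, hψθ3]
    · have := hanti w θ3 hw h
      linarith [hψθ3]
  have hψneg : ∀ w, θ3 < w → ψ w < 0 := by
    intro w hw
    have := hanti θ3 w (by linarith) hw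
    linarith [hψθ3]
  -- slices
  have hslice : ∀ w, θ2 < w →
      {x : ℝ | (x + w) * (P * (1 - β)) * (η * β * P * w ^ 2 - N0) > N0 ^ 2} = Ioi (ψ w) := by
    intro w hw
    have hDw := hD w hw
    ext x
    simp only [mem_setOf_eq, mem_Ioi, gt_iff_lt, hψ]
    rw [mul_assoc, ← div_lt_iff₀ (by positivity), ← sub_lt_iff_lt_add]
  have hslice0 : ∀ w, 0 ≤ w → w ≤ θ2 → ∀ x : ℝ, 0 ≤ x →
      ¬ ((x + w) * (P * (1 - β)) * (η * β * P * w ^ 2 - N0) > N0 ^ 2) := by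
    intro w hw0 hw2 x hx h
    have hDle : η * β * P * w ^ 2 - N0 ≤ 0 := by
      nlinarith [mul_nonneg (mul_nonneg hd.le (sub_nonneg.2 hw2)) (by linarith : (0:ℝ) ≤ θ2 + w)]
    have hle : (x + w) * (P * (1 - β)) * (η * β * P * w ^ 2 - N0) ≤ 0 :=
      mul_nonpos_of_nonneg_of_nonpos (mul_nonneg (by linarith) hc.le) hDle
    nlinarith
  -- rewrite via joint law
  have hmap : Measure.map (fun ω => (W ω, X ω)) μ
      = (expMeasure lamRD⁻¹).prod (expMeasure lamSR⁻¹) := by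
    rw [← hW, ← hX]
    exact (indepFun_iff_map_prod_eq_prod_map_map hWm.aemeasurable hXm.aemeasurable).1 hindep.symm
  set S : Set (ℝ × ℝ) :=
    {p : ℝ × ℝ | (p.2 + p.1) * (P * (1 - β)) * (η * β * P * p.1 ^ 2 - N0) > N0 ^ 2} with hS
  have hSm : MeasurableSet S := by
    have hf : Measurable fun p : ℝ × ℝ =>
        (p.2 + p.1) * (P * (1 - β)) * (η * β * P * p.1 ^ 2 - N0) := by fun_prop
    exact measurableSet_lt measurable_const hf
  have hEv : μ {ω | (X ω + W ω) * (P * (1 - β)) * (η * β * P * W ω ^ 2 - N0) > N0 ^ 2}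
      = ((expMeasure lamRD⁻¹).prod (expMeasure lamSR⁻¹)) S := by
    rw [← hmap, Measure.map_apply (hWm.prodMk hXm) hSm]
    rfl
  set g : ℝ → ENNReal := fun w => (expMeasure lamSR⁻¹) (Prod.mk w ⁻¹' S) with hg
  have hpre : ∀ w : ℝ, Prod.mk w ⁻¹' S
      = {x : ℝ | (x + w) * (P * (1 - β)) * (η * β * P * w ^ 2 - N0) > N0 ^ 2} := fun w => rfl
  -- T1
  have hae_nonneg : ∀ᵐ w ∂(expMeasure lamRD⁻¹), (0:ℝ) ≤ w := by
    rw [ae_iff]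
    have h0 : {w : ℝ | ¬ (0:ℝ) ≤ w} = Iio 0 := by ext w; simp [not_le]
    rw [h0]
    exact expMeasure_Iio_zero' _
  have T1 : ∫⁻ w in Iic θ2, g w ∂(expMeasure lamRD⁻¹) = 0 := by
    have hae0 : ∀ᵐ w ∂((expMeasure lamRD⁻¹).restrict (Iic θ2)), g w = 0 := by
      filter_upwards [ae_restrict_of_ae hae_nonneg, ae_restrict_mem measurableSet_Iic]
        with w hw0 hw2
      have hsub : Prod.mk w ⁻¹' S ⊆ Iio 0 := by
        intro x hx
        by_contra hxx
        exact hslice0 w hw0 hw2 x (not_lt.1 hxx) hx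
      exact measure_mono_null hsub (expMeasure_Iio_zero' _)
    rw [lintegral_congr_ae hae0, lintegral_zero]
  -- T3
  have T3 : ∫⁻ w in Ioi θ3, g w ∂(expMeasure lamRD⁻¹)
      = ENNReal.ofReal (rexp (-(lamRD⁻¹ * θ3))) := by
    have h1 : ∀ᵐ w ∂(expMeasure lamRD⁻¹), w ∈ Ioi θ3 → g w = 1 := by
      refine ae_of_all _ fun w hw => ?_
      rw [hg]
      simp only
      rw [hpre, hslice w (by exact hθ3.trans hw)]
      exact expMeasure_Ioi_of_neg' hrS (hψneg w hw)
    rw [setLIntegral_congr_fun_ae measurableSet_Ioi h1, setLIntegral_one]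
    exact expMeasure_Ioi' hrR (by linarith)
  -- measurability of ψ
  have hψm : Measurable ψ := by
    have : ψ = fun x => N0 ^ 2 / (P * (1 - β) * (η * β * P * x ^ 2 - N0)) - x := funext hψ
    rw [this]
    fun_prop
  -- T2
  have hfm : Measurable fun w : ℝ => ENNReal.ofReal (rexp (-(lamSR⁻¹ * ψ w))) := by fun_prop
  have T2 : ∫⁻ w in Ioc θ2 θ3, g w ∂(expMeasure lamRD⁻¹)
      = ENNReal.ofReal (∫ w in Ioc θ2 θ3,
          lamRD⁻¹ * rexp (-(lamRD⁻¹ * w)) * rexp (-(lamSR⁻¹ * ψ w))) := by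
    have h1 : ∀ᵐ w ∂(expMeasure lamRD⁻¹), w ∈ Ioc θ2 θ3 →
        g w = ENNReal.ofReal (rexp (-(lamSR⁻¹ * ψ w))) := by
      refine ae_of_all _ fun w hw => ?_
      rw [hg]
      simp only
      rw [hpre, hslice w hw.1]
      exact expMeasure_Ioi' hrS (hψpos w hw.1 hw.2)
    rw [setLIntegral_congr_fun_ae measurableSet_Ioc h1, expMeasure_def',
      setLIntegral_withDensity_eq_setLIntegral_mul _ (measurable_exponentialPDF' _) hfm
        measurableSet_Ioc]
    have h2 : ∀ᵐ w ∂(volume : Measure ℝ), w ∈ Ioc θ2 θ3 →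
        (exponentialPDF lamRD⁻¹ * fun w => ENNReal.ofReal (rexp (-(lamSR⁻¹ * ψ w)))) w
        = ENNReal.ofReal (lamRD⁻¹ * rexp (-(lamRD⁻¹ * w)) * rexp (-(lamSR⁻¹ * ψ w))) := by
      refine ae_of_all _ fun w hw => ?_
      have hw0 : (0:ℝ) ≤ w := le_trans hθ2nn hw.1.le
      simp only [Pi.mul_apply]
      rw [exponentialPDF_of_nonneg hw0, ← ENNReal.ofReal_mul (by positivity)]
    rw [setLIntegral_congr_fun_ae measurableSet_Ioc h2]
    rw [← ofReal_integral_eq_lintegral_ofReal]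
    · apply Measure.integrableOn_of_bounded (M := lamRD⁻¹) (by exact (measure_Ioc_lt_top).ne)
      · exact ((by fun_prop : Measurable fun w : ℝ =>
          lamRD⁻¹ * rexp (-(lamRD⁻¹ * w)) * rexp (-(lamSR⁻¹ * ψ w)))).aestronglyMeasurable
      · filter_upwards [ae_restrict_mem measurableSet_Ioc] with w hw
        have hw0 : (0:ℝ) ≤ w := le_trans hθ2nn hw.1.le
        have h1 : rexp (-(lamRD⁻¹ * w)) ≤ 1 := exp_le_one_iff.2 (by nlinarith)
        have h2' : rexp (-(lamSR⁻¹ * ψ w)) ≤ 1 :=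
          exp_le_one_iff.2 (by nlinarith [hψpos w hw.1 hw.2])
        rw [Real.norm_eq_abs, abs_of_nonneg (by positivity)]
        have hab : rexp (-(lamRD⁻¹ * w)) * rexp (-(lamSR⁻¹ * ψ w)) ≤ 1 :=
          mul_le_one₀ h1 (exp_pos _).le h2'
        calc lamRD⁻¹ * rexp (-(lamRD⁻¹ * w)) * rexp (-(lamSR⁻¹ * ψ w))
            = lamRD⁻¹ * (rexp (-(lamRD⁻¹ * w)) * rexp (-(lamSR⁻¹ * ψ w))) := by ring
          _ ≤ lamRD⁻¹ * 1 := by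
              exact mul_le_mul_of_nonneg_left hab hrR.le
          _ = lamRD⁻¹ := mul_one _
    · exact ae_of_all _ fun w => by positivity
  -- relate the real integral
  have hfun : ∀ x : ℝ, (1 / lamRD) * rexp (-(ψ x / lamSR + x / lamRD))
      = lamRD⁻¹ * rexp (-(lamRD⁻¹ * x)) * rexp (-(lamSR⁻¹ * ψ x)) := by
    intro x
    rw [mul_assoc, ← Real.exp_add, one_div]
    have hx : -(lamRD⁻¹ * x) + -(lamSR⁻¹ * ψ x) = -(ψ x / lamSR + x / lamRD) := by
      rw [div_eq_inv_mul, div_eq_inv_mul]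
      ring
    rw [hx]
  have hJ : (1 / lamRD) * (∫ x in θ2..θ3, rexp (-(ψ x / lamSR + x / lamRD)))
      = ∫ x in Ioc θ2 θ3, lamRD⁻¹ * rexp (-(lamRD⁻¹ * x)) * rexp (-(lamSR⁻¹ * ψ x)) := by
    rw [← intervalIntegral.integral_const_mul, intervalIntegral.integral_of_le hθ3.le]
    simp only [hfun]
  -- assemble
  have hsplit : ((expMeasure lamRD⁻¹).prod (expMeasure lamSR⁻¹)) S
      = ENNReal.ofReal (∫ x in Ioc θ2 θ3,
          lamRD⁻¹ * rexp (-(lamRD⁻¹ * x)) * rexp (-(lamSR⁻¹ * ψ x)))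
        + ENNReal.ofReal (rexp (-(lamRD⁻¹ * θ3))) := by
    rw [Measure.prod_apply hSm]
    rw [← lintegral_add_compl g (measurableSet_Iic (a := θ3)), compl_Iic,
      ← Iic_union_Ioc_eq_Iic hθ3.le, lintegral_union measurableSet_Ioc (Iic_disjoint_Ioc le_rfl),
      T1, T2, T3, zero_add]
  have hJnn : 0 ≤ ∫ x in Ioc θ2 θ3,
      lamRD⁻¹ * rexp (-(lamRD⁻¹ * x)) * rexp (-(lamSR⁻¹ * ψ x)) :=
    integral_nonneg fun x => by positivity
  rw [hEv, hsplit, ← ENNReal.ofReal_add hJnn (exp_pos _).le,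
    ENNReal.toReal_ofReal (by positivity), ← hJ]
  have : -(lamRD⁻¹ * θ3) = -θ3 / lamRD := by field_simp
  rw [this]
  ring
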